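/- arXiv:2504.19796 — 5 statements merged into one kernel-verified Lean document; each statement's English description precedes it below -/
import Mathlib

section
/- QP solution, CBF-active region (Lemma 2, case Ω_{cbf,2}^{c̄lf}): If F_λ ≤ 0 and F_V·‖b₁‖² < F_λ·⟨b₂, b₁⟩, then b₁ ≠ 0 and the unique global minimizer of the QP is u* = −(F_λ/‖b₁‖²)·b₁ together with δ* = 0. -/
open RealInnerProductSpace

/-- Feasible set of the QP: the CBF constraint `Fλ + ⟨b₁,u⟩ ≥ 0` and the
CLF constraint `F_V + ⟨b₂,u⟩ ≤ δ`. -/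
def QPFeasible {m : ℕ} (Fl FV : ℝ) (b₁ b₂ : EuclideanSpace ℝ (Fin m))
    (z : EuclideanSpace ℝ (Fin m) × ℝ) : Prop :=
  0 ≤ Fl + ⟪b₁, z.1⟫ ∧ FV + ⟪b₂, z.1⟫ ≤ z.2

/-- Objective of the QP: `‖u‖² + p δ²`. -/
noncomputable def QPObj {m : ℕ} (p : ℝ) (z : EuclideanSpace ℝ (Fin m) × ℝ) : ℝ :=
  ‖z.1‖ ^ 2 + p * z.2 ^ 2

/-- `z` is the unique global minimizer of the QP. -/
def QPUniqueMin {m : ℕ} (p Fl FV : ℝ) (b₁ b₂ : EuclideanSpace ℝ (Fin m))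
    (z : EuclideanSpace ℝ (Fin m) × ℝ) : Prop :=
  (QPFeasible Fl FV b₁ b₂ z ∧
      ∀ w, QPFeasible Fl FV b₁ b₂ w → QPObj p z ≤ QPObj p w) ∧
    ∀ w, (QPFeasible Fl FV b₁ b₂ w ∧
      ∀ v, QPFeasible Fl FV b₁ b₂ v → QPObj p w ≤ QPObj p v) → w = z

/-- QP solution on the CBF-active region `Ω_{cbf,2}^{c̄lf}`: if `Fλ ≤ 0` and
`F_V ‖b₁‖² < Fλ ⟨b₂,b₁⟩`, then `b₁ ≠ 0` and the unique global minimizer is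
`u* = -(Fλ/‖b₁‖²) b₁`, `δ* = 0`. -/
theorem qp_solution_cbf_active {m : ℕ} (p : ℝ) (hp : 0 < p)
    (Fl FV : ℝ) (b₁ b₂ : EuclideanSpace ℝ (Fin m))
    (hFl : Fl ≤ 0) (hlt : FV * ‖b₁‖ ^ 2 < Fl * ⟪b₂, b₁⟫) :
    b₁ ≠ 0 ∧
      QPUniqueMin p Fl FV b₁ b₂ (-(Fl / ‖b₁‖ ^ 2) • b₁, 0) := by
  have hb : b₁ ≠ 0 := by
    rintro rfl
    simp at hlt
  have hK : (0:ℝ) < ‖b₁‖ ^ 2 := by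
    have := norm_pos_iff.mpr hb
    positivity
  set K := ‖b₁‖ ^ 2 with hKdef
  set c : ℝ := -(Fl / K) with hc
  have hc0 : 0 ≤ c := by
    have : Fl / K ≤ 0 := div_nonpos_of_nonpos_of_nonneg hFl hK.le
    simpa [hc] using neg_nonneg.mpr this
  have hinner : ⟪b₁, c • b₁⟫ = -Fl := by
    rw [real_inner_smul_right, real_inner_self_eq_norm_sq]
    rw [hc, ← hKdef]; field_simp [hK.ne']
  have hnorm : ‖c • b₁‖ ^ 2 = Fl ^ 2 / K := by
    rw [norm_smul, mul_pow, Real.norm_eq_abs, sq_abs, hc]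
    field_simp
    ring
  -- key inequality
  have key : ∀ u : EuclideanSpace ℝ (Fin m), -Fl ≤ ⟪b₁, u⟫ →
      ‖c • b₁‖ ^ 2 + ‖u - c • b₁‖ ^ 2 ≤ ‖u‖ ^ 2 := by
    intro u hu
    have hexp : ‖u - c • b₁‖ ^ 2 = ‖u‖ ^ 2 - 2 * ⟪u, c • b₁⟫ + ‖c • b₁‖ ^ 2 := by
      rw [@norm_sub_sq_real]
    have hic : ⟪u, c • b₁⟫ = c * ⟪b₁, u⟫ := by
      rw [real_inner_smul_right, real_inner_comm]
    have h1 : Fl ^ 2 / K ≤ c * ⟪b₁, u⟫ := by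
      have := mul_le_mul_of_nonneg_left hu hc0
      calc Fl ^ 2 / K = c * (-Fl) := by rw [hc]; field_simp
        _ ≤ c * ⟪b₁, u⟫ := this
    rw [hic] at hexp
    clear_value K c
    linarith [hnorm, hexp, h1]
  have hfeas : QPFeasible Fl FV b₁ b₂ (c • b₁, 0) := by
    constructor
    · simp [hinner]
    · simp only
      have : ⟪b₂, c • b₁⟫ = c * ⟪b₂, b₁⟫ := real_inner_smul_right _ _ _
      rw [this, hc]
      have hFVle : FV ≤ Fl * ⟪b₂, b₁⟫ / K := by
        rw [le_div_iff₀ hK]; linarith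
      have heq : -(Fl / K) * ⟪b₂, b₁⟫ = -(Fl * ⟪b₂, b₁⟫ / K) := by ring
      rw [heq]; linarith
  refine ⟨hb, ⟨hfeas, ?_⟩, ?_⟩
  · rintro ⟨u, δ⟩ ⟨h1, h2⟩
    simp only [QPObj]
    have hu : -Fl ≤ ⟪b₁, u⟫ := by linarith [h1]
    have := key u hu
    nlinarith [sq_nonneg δ, norm_nonneg (u - c • b₁), sq_nonneg ‖u - c • b₁‖]
  · rintro ⟨u, δ⟩ ⟨⟨h1, h2⟩, hmin⟩
    have hu : -Fl ≤ ⟪b₁, u⟫ := by linarith [h1]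
    have hk := key u hu
    have hle : QPObj p (u, δ) ≤ QPObj p (c • b₁, 0) := hmin _ hfeas
    simp only [QPObj] at hle
    norm_num at hle
    have hpδ : p * δ ^ 2 ≤ 0 := by linarith [sq_nonneg ‖u - c • b₁‖]
    have hδ2 : δ ^ 2 ≤ 0 := by nlinarith [sq_nonneg δ]
    have hδ : δ = 0 := by
      have := le_antisymm hδ2 (sq_nonneg δ)
      exact sq_eq_zero_iff.mp this
    have huc : u = c • b₁ := by
      have h0 : ‖u - c • b₁‖ ^ 2 ≤ 0 := by nlinarith [sq_nonneg δ]
      have : ‖u - c • b₁‖ = 0 := by nlinarith [norm_nonneg (u - c • b₁)]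
      exact sub_eq_zero.mp (norm_eq_zero.mp this)
    rw [Prod.mk.injEq]
    exact ⟨huc, hδ⟩
end

section
/- QP solution, CLF-active region (Lemma 2, cases Ω_{c̄bf}^{clf} and Ω_{cbf,1}^{clf}): If F_V ≥ 0 and either F_V·⟨b₁, b₂⟩ < F_λ·(1/p + ‖b₂‖²), or F_λ = 0 and b₁ = 0, then the unique global minimizer of the QP is u* = −(F_V/(1/p + ‖b₂‖²))·b₂ together with δ* = F_V/(1 + p·‖b₂‖²). -/
open RealInnerProductSpace

/-- QP solution on the CLF-active region (cases `Ω_{c̄bf}^{clf}` and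
`Ω_{cbf,1}^{clf}`): if `F_V ≥ 0` and either `F_V ⟨b₁,b₂⟩ < Fλ (1/p + ‖b₂‖²)`,
or `Fλ = 0` and `b₁ = 0`, then the unique global minimizer is
`u* = -(F_V/(1/p + ‖b₂‖²)) b₂`, `δ* = F_V/(1 + p ‖b₂‖²)`. -/
theorem qp_solution_clf_active {m : ℕ} (p : ℝ) (hp : 0 < p)
    (Fl FV : ℝ) (b₁ b₂ : EuclideanSpace ℝ (Fin m))
    (hFV : 0 ≤ FV)
    (hcase : FV * ⟪b₁, b₂⟫ < Fl * (1 / p + ‖b₂‖ ^ 2) ∨ (Fl = 0 ∧ b₁ = 0)) :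
    QPUniqueMin p Fl FV b₁ b₂
      (-(FV / (1 / p + ‖b₂‖ ^ 2)) • b₂, FV / (1 + p * ‖b₂‖ ^ 2)) := by
  have hn0 : (0:ℝ) ≤ ‖b₂‖ ^ 2 := by positivity
  have hc : (0:ℝ) < 1 / p + ‖b₂‖ ^ 2 := by positivity
  have hpc : (0:ℝ) < 1 + p * ‖b₂‖ ^ 2 := by positivity
  set l : ℝ := FV / (1 / p + ‖b₂‖ ^ 2) with hl
  have hl0 : 0 ≤ l := div_nonneg hFV hc.le
  have hFVl : FV = l * (1 / p + ‖b₂‖ ^ 2) := by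
    rw [hl]; field_simp
  have hd : FV / (1 + p * ‖b₂‖ ^ 2) = l / p := by
    rw [hFVl]; field_simp
  -- key algebraic identity
  have key : ∀ (u : EuclideanSpace ℝ (Fin m)) (δ : ℝ),
      ‖u‖ ^ 2 + p * δ ^ 2 =
        (‖(-l) • b₂‖ ^ 2 + p * (FV / (1 + p * ‖b₂‖ ^ 2)) ^ 2)
          + (‖u - (-l) • b₂‖ ^ 2 + p * (δ - FV / (1 + p * ‖b₂‖ ^ 2)) ^ 2)
          + 2 * l * (δ - FV - ⟪b₂, u⟫) := by
    intro u δ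
    have h1 : ‖u - (-l) • b₂‖ ^ 2
        = ‖u‖ ^ 2 - 2 * ((-l) * ⟪b₂, u⟫) + l ^ 2 * ‖b₂‖ ^ 2 := by
      rw [norm_sub_sq_real, real_inner_smul_right, real_inner_comm, norm_smul]
      simp [mul_pow]
    have h2 : ‖(-l) • b₂‖ ^ 2 = l ^ 2 * ‖b₂‖ ^ 2 := by
      rw [norm_smul]; simp [mul_pow]
    rw [h1, h2, hd, hFVl]
    field_simp
    ring
  have hzfeas : QPFeasible Fl FV b₁ b₂
      (-(FV / (1 / p + ‖b₂‖ ^ 2)) • b₂, FV / (1 + p * ‖b₂‖ ^ 2)) := by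
    constructor
    · show (0:ℝ) ≤ Fl + ⟪b₁, (-l) • b₂⟫
      rw [real_inner_smul_right]
      rcases hcase with h | ⟨hFl, hb₁⟩
      · have : l * ⟪b₁, b₂⟫ < Fl := by
          rw [hl, div_mul_eq_mul_div, div_lt_iff₀ hc]
          calc FV * ⟪b₁, b₂⟫ = ⟪b₁, b₂⟫ * FV := by ring
          _ < Fl * (1 / p + ‖b₂‖ ^ 2) := by
              calc ⟪b₁, b₂⟫ * FV = FV * ⟪b₁, b₂⟫ := by ring
              _ < _ := h
        linarith
      · simp [hb₁, hFl]
    · show FV + ⟪b₂, (-l) • b₂⟫ ≤ FV / (1 + p * ‖b₂‖ ^ 2)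
      rw [real_inner_smul_right, real_inner_self_eq_norm_sq, hd]
      rw [hFVl]
      have : l * (1 / p + ‖b₂‖ ^ 2) + -l * ‖b₂‖ ^ 2 = l / p := by ring
      rw [this]
  have hmin : ∀ w, QPFeasible Fl FV b₁ b₂ w →
      QPObj p (-(FV / (1 / p + ‖b₂‖ ^ 2)) • b₂, FV / (1 + p * ‖b₂‖ ^ 2)) ≤ QPObj p w := by
    intro w hw
    have hk := key w.1 w.2
    have h1 : (0:ℝ) ≤ ‖w.1 - (-l) • b₂‖ ^ 2 := by positivity
    have h2 : (0:ℝ) ≤ p * (w.2 - FV / (1 + p * ‖b₂‖ ^ 2)) ^ 2 := by positivity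
    have h3 : (0:ℝ) ≤ 2 * l * (w.2 - FV - ⟪b₂, w.1⟫) := by
      have := hw.2
      have hmul : (0:ℝ) ≤ w.2 - FV - ⟪b₂, w.1⟫ := by linarith
      positivity
    simp only [QPObj]
    rw [hk]
    linarith
  refine ⟨⟨hzfeas, hmin⟩, ?_⟩
  rintro w ⟨hwfeas, hwmin⟩
  have h1 := hmin w hwfeas
  have h2 := hwmin _ hzfeas
  have heq : QPObj p w =
      QPObj p (-(FV / (1 / p + ‖b₂‖ ^ 2)) • b₂, FV / (1 + p * ‖b₂‖ ^ 2)) := le_antisymm h2 h1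
  have hk := key w.1 w.2
  simp only [QPObj] at heq
  have ha : (0:ℝ) ≤ ‖w.1 - (-l) • b₂‖ ^ 2 := by positivity
  have hb : (0:ℝ) ≤ p * (w.2 - FV / (1 + p * ‖b₂‖ ^ 2)) ^ 2 := by positivity
  have hcn : (0:ℝ) ≤ 2 * l * (w.2 - FV - ⟪b₂, w.1⟫) := by
    have := hwfeas.2
    have hmul : (0:ℝ) ≤ w.2 - FV - ⟪b₂, w.1⟫ := by linarith
    positivity
  have hzero1 : ‖w.1 - (-l) • b₂‖ ^ 2 = 0 := by linarith
  have hzero2 : p * (w.2 - FV / (1 + p * ‖b₂‖ ^ 2)) ^ 2 = 0 := by linarith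
  have hu : w.1 = (-l) • b₂ := by
    have := pow_eq_zero_iff (n := 2) (by norm_num) |>.mp hzero1
    rwa [norm_eq_zero, sub_eq_zero] at this
  have hδ : w.2 = FV / (1 + p * ‖b₂‖ ^ 2) := by
    have h4 : (w.2 - FV / (1 + p * ‖b₂‖ ^ 2)) ^ 2 = 0 := by
      rcases mul_eq_zero.mp hzero2 with h | h
      · exact absurd h hp.ne'
      · exact h
    have := pow_eq_zero_iff (n := 2) (by norm_num) |>.mp h4
    linarith [sub_eq_zero.mp this]
  exact Prod.ext hu hδ
end

section
/- QP solution, both constraints active (Lemma 2, case Ω_{cbf,2}^{clf}): Suppose F_V·‖b₁‖² ≥ F_λ·⟨b₂, b₁⟩, F_V·⟨b₁, b₂⟩ ≥ F_λ·(1/p + ‖b₂‖²), and b₁ ≠ 0. Set D := (1/p + ‖b₂‖²)·‖b₁‖² − ⟨b₁, b₂⟩² (which is positive), v₁ := (F_V·‖b₁‖² − F_λ·⟨b₂, b₁⟩)/D and v₂ := (F_V·⟨b₂, b₁⟩ − F_λ·(1/p + ‖b₂‖²))/D. Then the unique global minimizer of the QP is u* = −v₁·b₂ + v₂·b₁ together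 with δ* = F_V + ⟨b₂, u*⟩, and moreover the CBF constraint is active at the minimizer: F_λ + ⟨b₁, u*⟩ = 0. -/
open RealInnerProductSpace

/-- Scalar algebra behind the KKT conditions of the QP. -/
lemma qp_key_aux (p D v₁ v₂ Fl FV B n1 n2 : ℝ) (hp : p ≠ 0)
    (hD : D = (1/p + n2) * n1 - B ^ 2) (hDne : D ≠ 0)
    (hv₁ : v₁ = (FV * n1 - Fl * B) / D)
    (hv₂ : v₂ = (FV * B - Fl * (1/p + n2)) / D) :
    -v₁ * B + v₂ * n1 = -Fl ∧ p * (FV + (-v₁ * n2 + v₂ * B)) = v₁ := by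
  subst hv₁ hv₂
  constructor
  · field_simp [hDne]
    rw [hD]
    field_simp
    ring
  · field_simp [hDne]
    rw [hD]
    field_simp
    ring

/-- QP solution when both constraints are active (case `Ω_{cbf,2}^{clf}`). -/
theorem qp_solution_both_active {m : ℕ} (p : ℝ) (hp : 0 < p)
    (Fl FV : ℝ) (b₁ b₂ : EuclideanSpace ℝ (Fin m))
    (h1 : Fl * ⟪b₂, b₁⟫ ≤ FV * ‖b₁‖ ^ 2)
    (h2 : Fl * (1 / p + ‖b₂‖ ^ 2) ≤ FV * ⟪b₁, b₂⟫)
    (hb₁ : b₁ ≠ 0)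
    (D : ℝ) (hD : D = (1 / p + ‖b₂‖ ^ 2) * ‖b₁‖ ^ 2 - ⟪b₁, b₂⟫ ^ 2)
    (v₁ : ℝ) (hv₁ : v₁ = (FV * ‖b₁‖ ^ 2 - Fl * ⟪b₂, b₁⟫) / D)
    (v₂ : ℝ) (hv₂ : v₂ = (FV * ⟪b₂, b₁⟫ - Fl * (1 / p + ‖b₂‖ ^ 2)) / D) :
    0 < D ∧
      QPUniqueMin p Fl FV b₁ b₂
        (-v₁ • b₂ + v₂ • b₁, FV + ⟪b₂, -v₁ • b₂ + v₂ • b₁⟫) ∧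
      Fl + ⟪b₁, -v₁ • b₂ + v₂ • b₁⟫ = 0 := by
  have hc : (⟪b₂, b₁⟫ : ℝ) = ⟪b₁, b₂⟫ := real_inner_comm _ _
  have hbn : 0 < ‖b₁‖ := norm_pos_iff.mpr hb₁
  have hcs : ⟪b₁, b₂⟫ ^ 2 ≤ ‖b₁‖ ^ 2 * ‖b₂‖ ^ 2 := by
    nlinarith [abs_real_inner_le_norm b₁ b₂, sq_abs (⟪b₁, b₂⟫ : ℝ),
      abs_nonneg (⟪b₁, b₂⟫ : ℝ), norm_nonneg b₁, norm_nonneg b₂,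
      mul_nonneg (norm_nonneg b₁) (norm_nonneg b₂)]
  have h1p : (0 : ℝ) < 1 / p := by positivity
  have hD0 : 0 < D := by
    rw [hD]; nlinarith [mul_pos h1p (pow_pos hbn 2)]
  have hDne : D ≠ 0 := ne_of_gt hD0
  have hv1 : 0 ≤ v₁ := by
    rw [hv₁]; exact div_nonneg (by linarith) hD0.le
  have hv2 : 0 ≤ v₂ := by
    rw [hv₂, hc]; exact div_nonneg (by linarith) hD0.le
  obtain ⟨key1, key2⟩ :=
    qp_key_aux p D v₁ v₂ Fl FV ⟪b₁, b₂⟫ (‖b₁‖ ^ 2) (‖b₂‖ ^ 2) hp.ne' hD hDne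
      (by rw [hv₁, hc]) (by rw [hv₂, hc])
  have e1 : ⟪b₁, -v₁ • b₂ + v₂ • b₁⟫ = -v₁ * ⟪b₁, b₂⟫ + v₂ * ‖b₁‖ ^ 2 := by
    rw [inner_add_right, real_inner_smul_right, real_inner_smul_right,
      real_inner_self_eq_norm_sq]
  have e2 : ⟪b₂, -v₁ • b₂ + v₂ • b₁⟫ = -v₁ * ‖b₂‖ ^ 2 + v₂ * ⟪b₁, b₂⟫ := by
    rw [inner_add_right, real_inner_smul_right, real_inner_smul_right,
      real_inner_self_eq_norm_sq, hc]
  have active : Fl + ⟪b₁, -v₁ • b₂ + v₂ • b₁⟫ = 0 := by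
    rw [e1]; linarith [key1]
  set ustar : EuclideanSpace ℝ (Fin m) := -v₁ • b₂ + v₂ • b₁ with hustar
  have enorm : ‖ustar‖ ^ 2
      = v₁ ^ 2 * ‖b₂‖ ^ 2 - 2 * v₁ * v₂ * ⟪b₁, b₂⟫ + v₂ ^ 2 * ‖b₁‖ ^ 2 := by
    rw [← real_inner_self_eq_norm_sq]
    nth_rewrite 1 [hustar]
    rw [inner_add_left, real_inner_smul_left, real_inner_smul_left, e1, e2]
    ring
  have zfeas : QPFeasible Fl FV b₁ b₂ (ustar, FV + ⟪b₂, ustar⟫) :=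
    ⟨le_of_eq active.symm, le_refl _⟩
  have main : ∀ (u : EuclideanSpace ℝ (Fin m)) (δ : ℝ),
      0 ≤ Fl + ⟪b₁, u⟫ → FV + ⟪b₂, u⟫ ≤ δ →
      QPObj p (ustar, FV + ⟪b₂, ustar⟫) + ‖u - ustar‖ ^ 2
        + p * (δ - (FV + ⟪b₂, ustar⟫)) ^ 2 ≤ QPObj p (u, δ) := by
    intro u δ hfa hfb
    have eu : ⟪u, ustar⟫ = -v₁ * ⟪b₂, u⟫ + v₂ * ⟪b₁, u⟫ := by
      rw [hustar, inner_add_right, real_inner_smul_right, real_inner_smul_right,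
        real_inner_comm u b₂, real_inner_comm u b₁]
    have hexp : ‖u - ustar‖ ^ 2 = ‖u‖ ^ 2 - 2 * ⟪u, ustar⟫ + ‖ustar‖ ^ 2 :=
      norm_sub_sq_real u ustar
    have ident : QPObj p (u, δ)
        - (QPObj p (ustar, FV + ⟪b₂, ustar⟫) + ‖u - ustar‖ ^ 2
          + p * (δ - (FV + ⟪b₂, ustar⟫)) ^ 2)
        = 2 * v₂ * (Fl + ⟪b₁, u⟫) + 2 * v₁ * (δ - (FV + ⟪b₂, u⟫)) := by
      simp only [QPObj]
      rw [hexp, eu, enorm, e2]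
      linear_combination (-2 * v₂) * key1
        + (2 * (δ - (FV + (-v₁ * ‖b₂‖ ^ 2 + v₂ * ⟪b₁, b₂⟫)))) * key2
    have hp1 : 0 ≤ 2 * v₂ * (Fl + ⟪b₁, u⟫) := by
      have := mul_nonneg hv2 hfa; linarith
    have hp2 : 0 ≤ 2 * v₁ * (δ - (FV + ⟪b₂, u⟫)) := by
      have := mul_nonneg hv1 (by linarith : (0:ℝ) ≤ δ - (FV + ⟪b₂, u⟫)); linarith
    linarith [ident, hp1, hp2]
  refine ⟨hD0, ⟨⟨zfeas, ?_⟩, ?_⟩, active⟩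
  · intro w hw
    have h := main w.1 w.2 hw.1 hw.2
    have h2' : QPObj p (w.1, w.2) = QPObj p w := rfl
    linarith [h, h2', sq_nonneg ‖w.1 - ustar‖,
      mul_nonneg hp.le (sq_nonneg (w.2 - (FV + ⟪b₂, ustar⟫)))]
  · intro w hw
    obtain ⟨hwf, hwmin⟩ := hw
    have hA := hwmin _ zfeas
    have hB := main w.1 w.2 hwf.1 hwf.2
    have hB' : QPObj p (w.1, w.2) = QPObj p w := rfl
    have hsum : ‖w.1 - ustar‖ ^ 2 + p * (w.2 - (FV + ⟪b₂, ustar⟫)) ^ 2 ≤ 0 := by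
      rw [hB'] at hB; linarith
    have hn1 : ‖w.1 - ustar‖ ^ 2 = 0 := by
      have := mul_nonneg hp.le (sq_nonneg (w.2 - (FV + ⟪b₂, ustar⟫)))
      have := sq_nonneg ‖w.1 - ustar‖
      linarith
    have hn2 : p * (w.2 - (FV + ⟪b₂, ustar⟫)) ^ 2 = 0 := by
      have := mul_nonneg hp.le (sq_nonneg (w.2 - (FV + ⟪b₂, ustar⟫)))
      have := sq_nonneg ‖w.1 - ustar‖
      linarith
    have hu : w.1 = ustar := by
      have h0 : ‖w.1 - ustar‖ = 0 := by
        exact pow_eq_zero_iff (two_ne_zero) |>.mp hn1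
      exact sub_eq_zero.mp (norm_eq_zero.mp h0)
    have hd : w.2 = FV + ⟪b₂, ustar⟫ := by
      have h0 : (w.2 - (FV + ⟪b₂, ustar⟫)) ^ 2 = 0 :=
        (mul_eq_zero.mp hn2).resolve_left hp.ne'
      have := pow_eq_zero_iff (two_ne_zero) |>.mp h0
      linarith
    exact Prod.ext hu hd
end

section
/- Proposition 3 (robust modified CBF condition from SOS certificates): Let f be an n-vector of real polynomials in n variables, g an n×m matrix of real polynomials, h a real polynomial, λ a real polynomial, ε > 0 with λ − ε SOS, η ≥ 0, and λ₁ an m-vector of real polynomials. If the polynomial L_f h + λ·h − η + Σⱼ λ₁ⱼ·(L_g h)ⱼ is SOS, then for every x ∈ ℝⁿ there exists u ∈ ℝ^m such that L_f h(x) + Σⱼ (L_g h)ⱼ(x)·uⱼ + λ(x)·h(x) ≥ η; in particular h satisfies the modified CBF condition with robustness margin η. -/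
open MvPolynomial

/-- A real multivariate polynomial is a sum of squares (SOS). -/
def IsSOS {n : ℕ} (p : MvPolynomial (Fin n) ℝ) : Prop :=
  ∃ (k : ℕ) (q : Fin k → MvPolynomial (Fin n) ℝ), p = ∑ i, (q i) ^ 2

/-- Polynomial Lie derivative `L_f h = Σᵢ fᵢ ∂h/∂xᵢ`. -/
noncomputable def LfPoly {n : ℕ} (f : Fin n → MvPolynomial (Fin n) ℝ)
    (h : MvPolynomial (Fin n) ℝ) : MvPolynomial (Fin n) ℝ :=
  ∑ i, f i * pderiv i h

/-- Polynomial Lie derivative `(L_g h)ⱼ = Σᵢ g_{ij} ∂h/∂xᵢ`. -/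
noncomputable def LgPoly {n m : ℕ} (g : Fin n → Fin m → MvPolynomial (Fin n) ℝ)
    (h : MvPolynomial (Fin n) ℝ) (j : Fin m) : MvPolynomial (Fin n) ℝ :=
  ∑ i, g i j * pderiv i h

/-- Proposition 3: robust modified CBF condition from SOS certificates.
The conclusion states that `h` satisfies the modified CBF condition with
robustness margin `η`. -/
theorem robust_modified_cbf_from_sos {n m : ℕ}
    (f : Fin n → MvPolynomial (Fin n) ℝ)
    (g : Fin n → Fin m → MvPolynomial (Fin n) ℝ)
    (h lam : MvPolynomial (Fin n) ℝ)
    (ε : ℝ) (hε : 0 < ε) (hlam : IsSOS (lam - C ε))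
    (η : ℝ) (hη : 0 ≤ η)
    (lam₁ : Fin m → MvPolynomial (Fin n) ℝ)
    (hcert : IsSOS (LfPoly f h + lam * h - C η + ∑ j, lam₁ j * LgPoly g h j)) :
    ∀ x : Fin n → ℝ, ∃ u : Fin m → ℝ,
      η ≤ eval x (LfPoly f h) + (∑ j, eval x (LgPoly g h j) * u j) +
        eval x lam * eval x h := by
  intro x
  refine ⟨fun j => eval x (lam₁ j), ?_⟩
  have h0 : 0 ≤ eval x (LfPoly f h + lam * h - C η + ∑ j, lam₁ j * LgPoly g h j) := by
    obtain ⟨k, q, hq⟩ := hcert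
    rw [hq]
    simp only [map_sum, map_pow]
    exact Finset.sum_nonneg fun i _ => sq_nonneg _
  simp only [map_add, map_sub, map_mul, map_sum, eval_C] at h0
  have : ∑ j, eval x (LgPoly g h j) * eval x (lam₁ j)
      = ∑ j, eval x (lam₁ j) * eval x (LgPoly g h j) := by
    exact Finset.sum_congr rfl fun j _ => mul_comm _ _
  linarith
end

section
/- Local Lipschitz continuity of the QP-based control law (Theorem 1, item 1): Let p > 0, let F_λ, F_V : ℝⁿ → ℝ and b₁, b₂ : ℝⁿ → ℝ^m be locally Lipschitz functions with F_V(x) ≤ 0 for all x, and assume that for every x ∈ ℝⁿ either b₁(x) ≠ 0 or F_λ(x) > 0. For each x let (u'(x), δ(x)) denote the unique global minimizer of the QP with data (F_λ(x), F_V(x), b₁(x), b₂(x), p). Then the map x ↦ (u'(x), δ(x)) is locally Lipschitz continuous on ℝⁿ. -/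
set_option maxHeartbeats 2000000


open RealInnerProductSpace

/-- All scalar facts about the KKT multipliers of the QP. -/
lemma qp_scalar {p r a c d F G Ft D s l1 l2 : ℝ} (hp : 0 < p) (hr : 0 < r) (hG : G ≤ 0)
    (ha : r < a) (hd0 : 0 ≤ d) (hcs : c * c ≤ a * d)
    (hFt : Ft = min F 0)
    (hD : D = a * (d + p⁻¹) - c * c)
    (hs : s = a * G - c * Ft)
    (hl2 : l2 = 2 * max s 0 * D⁻¹)
    (hl1 : l1 = (c * l2 - 2 * Ft) * a⁻¹) :
    0 ≤ l1 ∧ 0 ≤ l2 ∧ l1 * (F - Ft) = 0 ∧ l1 * a = c * l2 - 2 * Ft ∧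
      0 ≤ (2 * p)⁻¹ * l2 - G - (2⁻¹ * l1 * c - 2⁻¹ * l2 * d) ∧
      l2 * ((2 * p)⁻¹ * l2 - G - (2⁻¹ * l1 * c - 2⁻¹ * l2 * d)) = 0 := by
  have ha0 : 0 < a := lt_trans hr ha
  have hFtF : Ft ≤ F := hFt ▸ min_le_left F 0
  have hFt0 : Ft ≤ 0 := hFt ▸ min_le_right F 0
  have hD0 : 0 < D := by
    have h1 : 0 < a * p⁻¹ := by positivity
    nlinarith
  have hDinv : 0 < D⁻¹ := by positivity
  have hDD : D * D⁻¹ = 1 := mul_inv_cancel₀ hD0.ne'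
  have haa : a * a⁻¹ = 1 := mul_inv_cancel₀ ha0.ne'
  have hl2nn : 0 ≤ l2 := by
    rw [hl2]
    have h0 : (0:ℝ) ≤ max s 0 := le_max_right s 0
    positivity
  have hl1a : l1 * a = c * l2 - 2 * Ft := by
    rw [hl1]; field_simp
  have hl2D : l2 * D = 2 * max s 0 := by
    rw [hl2]; field_simp
  have hkey : a * ((2 * p)⁻¹ * l2 - G - (2⁻¹ * l1 * c - 2⁻¹ * l2 * d)) = max s 0 - s := by
    have expand : a * ((2 * p)⁻¹ * l2 - G - (2⁻¹ * l1 * c - 2⁻¹ * l2 * d))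
        = 2⁻¹ * (l2 * D) - s - 2⁻¹ * c * (l1 * a - (c * l2 - 2 * Ft)) := by
      rw [hD, hs]
      field_simp
      ring
    rw [expand, hl1a, hl2D]
    ring
  have hfeas2 : 0 ≤ (2 * p)⁻¹ * l2 - G - (2⁻¹ * l1 * c - 2⁻¹ * l2 * d) := by
    have hsle : s ≤ max s 0 := le_max_left s 0
    nlinarith [hkey]
  have hmaxs : max s 0 * (max s 0 - s) = 0 := by
    rcases le_or_gt s 0 with h | h
    · rw [max_eq_right h, zero_mul]
    · rw [max_eq_left h.le]; ring
  have hcompl2 : l2 * ((2 * p)⁻¹ * l2 - G - (2⁻¹ * l1 * c - 2⁻¹ * l2 * d)) = 0 := by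
    have h1 : a * (l2 * ((2 * p)⁻¹ * l2 - G - (2⁻¹ * l1 * c - 2⁻¹ * l2 * d)))
        = l2 * (max s 0 - s) := by rw [← hkey]; ring
    have h3 : D * (l2 * (max s 0 - s)) = 2 * (max s 0 * (max s 0 - s)) := by
      rw [← mul_assoc, mul_comm D l2, hl2D]; ring
    rw [hmaxs, mul_zero] at h3
    have h2 : l2 * (max s 0 - s) = 0 :=
      (mul_eq_zero.mp h3).resolve_left hD0.ne'
    rw [h2] at h1
    exact (mul_eq_zero.mp h1).resolve_left ha0.ne'
  have hnum : F ≤ 0 → 0 ≤ c * l2 - 2 * F := by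
    intro hF
    have hFtF' : Ft = F := hFt ▸ min_eq_left hF
    rcases le_or_gt s 0 with hsn | hsp
    · have hl20 : l2 = 0 := by rw [hl2, max_eq_right hsn]; ring
      rw [hl20]; linarith
    · have hl2s : l2 = 2 * s * D⁻¹ := by rw [hl2, max_eq_left hsp.le]
      have hs' : s = a * G - c * F := by rw [hs, hFtF']
      have h3 : F * D ≤ c * s := by
        rcases le_or_gt c 0 with hc | hc
        · have h1 : 0 ≤ c * G := by nlinarith
          have h2 : F * (d + p⁻¹) ≤ 0 :=
            mul_nonpos_of_nonpos_of_nonneg hF (by positivity)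
          have t1 := mul_le_mul_of_nonneg_left h2 ha0.le
          have t2 := mul_le_mul_of_nonneg_left h1 ha0.le
          rw [hD, hs']
          nlinarith
        · have t1 : 0 ≤ c * s := mul_nonneg hc.le hsp.le
          have t2 : a * d * F ≤ c * c * F := by nlinarith
          have t3 : a * p⁻¹ * F ≤ 0 := by
            have : 0 < a * p⁻¹ := by positivity
            exact mul_nonpos_of_nonneg_of_nonpos this.le hF
          rw [hD, hs'] at *
          nlinarith
      have e1 : (c * l2 - 2 * F) * D = 2 * (c * s - F * D) := by
        rw [hl2s]
        field_simp
      nlinarith [e1, h3, hD0]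
  have hl20' : 0 < F → l2 = 0 := by
    intro hF
    have hFt' : Ft = 0 := hFt ▸ min_eq_right hF.le
    have hs0 : s ≤ 0 := by rw [hs, hFt']; nlinarith
    rw [hl2, max_eq_right hs0]; ring
  have hl1nn : 0 ≤ l1 := by
    rcases le_or_gt F 0 with hF | hF
    · have hFtF' : Ft = F := hFt ▸ min_eq_left hF
      rw [hl1, hFtF']
      exact mul_nonneg (hnum hF) (by positivity)
    · have hFt' : Ft = 0 := hFt ▸ min_eq_right hF.le
      rw [hl1, hl20' hF, hFt']
      simp
  have hcompl1 : l1 * (F - Ft) = 0 := by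
    rcases le_or_gt F 0 with hF | hF
    · have hFtF' : Ft = F := hFt ▸ min_eq_left hF
      rw [hFtF']; ring
    · have hFt' : Ft = 0 := hFt ▸ min_eq_right hF.le
      have hl10 : l1 = 0 := by
        rw [hl1, hl20' hF, hFt']; simp
      rw [hl10]; ring
  exact ⟨hl1nn, hl2nn, hcompl1, hl1a, hfeas2, hcompl2⟩

noncomputable def QPlam2 {m : ℕ} (p r F G : ℝ) (b₁ b₂ : EuclideanSpace ℝ (Fin m)) : ℝ :=
  2 * max (⟪b₁, b₁⟫ * G - ⟪b₁, b₂⟫ * min F 0) 0 *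
    (max (⟪b₁, b₁⟫ * (⟪b₂, b₂⟫ + p⁻¹) - ⟪b₁, b₂⟫ * ⟪b₁, b₂⟫) (r * p⁻¹))⁻¹

noncomputable def QPlam1 {m : ℕ} (p r F G : ℝ) (b₁ b₂ : EuclideanSpace ℝ (Fin m)) : ℝ :=
  (⟪b₁, b₂⟫ * QPlam2 p r F G b₁ b₂ - 2 * min F 0) * (max ⟪b₁, b₁⟫ r)⁻¹

noncomputable def QPsol {m : ℕ} (p r F G : ℝ) (b₁ b₂ : EuclideanSpace ℝ (Fin m)) :
    EuclideanSpace ℝ (Fin m) × ℝ :=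
  (((2:ℝ)⁻¹ * QPlam1 p r F G b₁ b₂) • b₁ - ((2:ℝ)⁻¹ * QPlam2 p r F G b₁ b₂) • b₂,
    (2 * p)⁻¹ * QPlam2 p r F G b₁ b₂)

lemma QPsol_spec {m : ℕ} {p r F G : ℝ} (hp : 0 < p) (hr : 0 < r)
    (b₁ b₂ : EuclideanSpace ℝ (Fin m)) (hG : G ≤ 0) (ha : r < ⟪b₁, b₁⟫) :
    QPFeasible F G b₁ b₂ (QPsol p r F G b₁ b₂) ∧
      ∀ v, QPFeasible F G b₁ b₂ v → QPObj p (QPsol p r F G b₁ b₂) ≤ QPObj p v := by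
  have ha0 : (0:ℝ) < ⟪b₁, b₁⟫ := lt_trans hr ha
  have hd0 : (0:ℝ) ≤ ⟪b₂, b₂⟫ := real_inner_self_nonneg
  have hcs : ⟪b₁, b₂⟫ * ⟪b₁, b₂⟫ ≤ ⟪b₁, b₁⟫ * ⟪b₂, b₂⟫ := real_inner_mul_inner_self_le b₁ b₂
  have hDpos : r * p⁻¹ < ⟪b₁, b₁⟫ * (⟪b₂, b₂⟫ + p⁻¹) - ⟪b₁, b₂⟫ * ⟪b₁, b₂⟫ := by
    have h1 : r * p⁻¹ < ⟪b₁, b₁⟫ * p⁻¹ := by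
      apply mul_lt_mul_of_pos_right ha (by positivity)
    nlinarith
  have hl2eq : QPlam2 p r F G b₁ b₂ =
      2 * max (⟪b₁, b₁⟫ * G - ⟪b₁, b₂⟫ * min F 0) 0 *
        (⟪b₁, b₁⟫ * (⟪b₂, b₂⟫ + p⁻¹) - ⟪b₁, b₂⟫ * ⟪b₁, b₂⟫)⁻¹ := by
    rw [QPlam2, max_eq_left hDpos.le]
  have hl1eq : QPlam1 p r F G b₁ b₂ =
      (⟪b₁, b₂⟫ * QPlam2 p r F G b₁ b₂ - 2 * min F 0) * ⟪b₁, b₁⟫⁻¹ := by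
    rw [QPlam1, max_eq_left ha.le]
  obtain ⟨hl1nn, hl2nn, hcompl1, hl1a, hfeas2s, hcompl2⟩ :=
    qp_scalar (a := ⟪b₁, b₁⟫) (c := ⟪b₁, b₂⟫) (d := ⟪b₂, b₂⟫)
      (Ft := min F 0) (D := ⟪b₁, b₁⟫ * (⟪b₂, b₂⟫ + p⁻¹) - ⟪b₁, b₂⟫ * ⟪b₁, b₂⟫)
      (s := ⟪b₁, b₁⟫ * G - ⟪b₁, b₂⟫ * min F 0)
      (l1 := QPlam1 p r F G b₁ b₂) (l2 := QPlam2 p r F G b₁ b₂)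
      hp hr hG ha hd0 hcs rfl rfl rfl hl2eq hl1eq
  set l1 : ℝ := QPlam1 p r F G b₁ b₂
  set l2 : ℝ := QPlam2 p r F G b₁ b₂
  have hzfst : (QPsol p r F G b₁ b₂).1 = ((2:ℝ)⁻¹ * l1) • b₁ - ((2:ℝ)⁻¹ * l2) • b₂ := rfl
  have hzsnd : (QPsol p r F G b₁ b₂).2 = (2 * p)⁻¹ * l2 := rfl
  have hb1u : ⟪b₁, (QPsol p r F G b₁ b₂).1⟫ = -(min F 0) := by
    rw [hzfst, inner_sub_right, real_inner_smul_right, real_inner_smul_right]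
    nlinarith [hl1a]
  have hb2u : ⟪b₂, (QPsol p r F G b₁ b₂).1⟫ = 2⁻¹ * l1 * ⟪b₁, b₂⟫ - 2⁻¹ * l2 * ⟪b₂, b₂⟫ := by
    rw [hzfst, inner_sub_right, real_inner_smul_right, real_inner_smul_right,
      real_inner_comm b₂ b₁]
  have hfeas : QPFeasible F G b₁ b₂ (QPsol p r F G b₁ b₂) := by
    constructor
    · rw [hb1u]
      have := min_le_left F 0
      linarith
    · rw [hb2u, hzsnd]
      linarith [hfeas2s]
  refine ⟨hfeas, ?_⟩
  intro v hv
  obtain ⟨hv1, hv2⟩ := hv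
  have hU : ‖(QPsol p r F G b₁ b₂).1‖ ^ 2
      = 2⁻¹ * l1 * (-(min F 0)) - 2⁻¹ * l2 * ⟪b₂, (QPsol p r F G b₁ b₂).1⟫ := by
    rw [← real_inner_self_eq_norm_sq]
    nth_rewrite 1 [hzfst]
    rw [inner_sub_left, real_inner_smul_left, real_inner_smul_left, hb1u]
  have hIv : ⟪v.1, (QPsol p r F G b₁ b₂).1⟫
      = 2⁻¹ * l1 * ⟪b₁, v.1⟫ - 2⁻¹ * l2 * ⟪b₂, v.1⟫ := by
    conv_lhs => rw [hzfst]
    rw [inner_sub_right, real_inner_smul_right, real_inner_smul_right,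
      real_inner_comm v.1 b₁, real_inner_comm v.1 b₂]
  have hconv1 : 0 ≤ ‖v.1‖ ^ 2 + ‖(QPsol p r F G b₁ b₂).1‖ ^ 2
      - 2 * ⟪v.1, (QPsol p r F G b₁ b₂).1⟫ := by
    have h := norm_sub_sq_real v.1 (QPsol p r F G b₁ b₂).1
    nlinarith [sq_nonneg ‖v.1 - (QPsol p r F G b₁ b₂).1‖]
  have hconv2 : 0 ≤ (v.2 - (2 * p)⁻¹ * l2) ^ 2 := sq_nonneg _
  have hprod1 : 0 ≤ l1 * (F + ⟪b₁, v.1⟫) := mul_nonneg hl1nn hv1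
  have hprod2 : 0 ≤ l2 * (v.2 - G - ⟪b₂, v.1⟫) := by
    apply mul_nonneg hl2nn; linarith
  have hδobj : p * ((2 * p)⁻¹ * l2) ^ 2 = 2⁻¹ * ((2 * p) ⁻¹ * l2) * l2 := by
    have hp' : p ≠ 0 := hp.ne'
    field_simp
  have hpv2 : l2 * v.2 - p * ((2 * p)⁻¹ * l2) ^ 2 ≤ p * v.2 ^ 2 := by
    have hsq : 0 ≤ p * (v.2 - (2 * p)⁻¹ * l2) ^ 2 := by positivity
    have hq : p * (v.2 - (2 * p)⁻¹ * l2) ^ 2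
        = p * v.2 ^ 2 - l2 * v.2 + p * ((2 * p)⁻¹ * l2) ^ 2 := by
      have hp' : p ≠ 0 := hp.ne'
      field_simp
      ring
    linarith [hq ▸ hsq]
  have hcompl2' : l2 * ((2 * p)⁻¹ * l2 - G - ⟪b₂, (QPsol p r F G b₁ b₂).1⟫) = 0 := by
    rw [hb2u]; exact hcompl2
  show ‖(QPsol p r F G b₁ b₂).1‖ ^ 2 + p * (QPsol p r F G b₁ b₂).2 ^ 2
      ≤ ‖v.1‖ ^ 2 + p * v.2 ^ 2
  rw [hzsnd]
  linarith [hconv1, hpv2, hδobj, hU, hIv, hcompl1, hcompl2', hprod1, hprod2]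

section combinators

variable {X : Type*} [PseudoEMetricSpace X]
variable {E : Type*} [NormedAddCommGroup E] [InnerProductSpace ℝ E]

lemma ll_mul {f g : X → ℝ} (hf : LocallyLipschitz f) (hg : LocallyLipschitz g) :
    LocallyLipschitz fun x => f x * g x :=
  ((contDiff_fst.mul contDiff_snd : ContDiff ℝ 1 fun q : ℝ × ℝ => q.1 * q.2).locallyLipschitz).comp
    (hf.prodMk hg)

lemma ll_add {F : Type*} [NormedAddCommGroup F] [NormedSpace ℝ F] {f g : X → F}
    (hf : LocallyLipschitz f) (hg : LocallyLipschitz g) :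
    LocallyLipschitz fun x => f x + g x :=
  ((contDiff_fst.add contDiff_snd : ContDiff ℝ 1 fun q : F × F => q.1 + q.2).locallyLipschitz).comp
    (hf.prodMk hg)

lemma ll_sub {F : Type*} [NormedAddCommGroup F] [NormedSpace ℝ F] {f g : X → F}
    (hf : LocallyLipschitz f) (hg : LocallyLipschitz g) :
    LocallyLipschitz fun x => f x - g x :=
  ((contDiff_fst.sub contDiff_snd : ContDiff ℝ 1 fun q : F × F => q.1 - q.2).locallyLipschitz).comp
    (hf.prodMk hg)

lemma ll_smul {F : Type*} [NormedAddCommGroup F] [NormedSpace ℝ F] {f : X → ℝ} {g : X → F}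
    (hf : LocallyLipschitz f) (hg : LocallyLipschitz g) :
    LocallyLipschitz fun x => f x • g x :=
  ((contDiff_fst.smul contDiff_snd : ContDiff ℝ 1 fun q : ℝ × F => q.1 • q.2).locallyLipschitz).comp
    (hf.prodMk hg)

lemma ll_inner {f g : X → E} (hf : LocallyLipschitz f) (hg : LocallyLipschitz g) :
    LocallyLipschitz fun x => ⟪f x, g x⟫ :=
  ((contDiff_fst.inner ℝ contDiff_snd :
      ContDiff ℝ 1 fun q : E × E => ⟪q.1, q.2⟫).locallyLipschitz).comp
    (hf.prodMk hg)

lemma lipschitz_clampInv {r : ℝ} (hr : 0 < r) :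
    LipschitzWith ⟨r⁻¹ * r⁻¹, by positivity⟩ (fun t : ℝ => (max t r)⁻¹) := by
  apply LipschitzWith.of_dist_le_mul
  intro x y
  have hx : r ≤ max x r := le_max_right x r
  have hy : r ≤ max y r := le_max_right y r
  have hx0 : 0 < max x r := lt_of_lt_of_le hr hx
  have hy0 : 0 < max y r := lt_of_lt_of_le hr hy
  have hmax : |max x r - max y r| ≤ |x - y| := abs_max_sub_max_le_abs x y r
  rw [Real.dist_eq, Real.dist_eq]
  have heq : (max x r)⁻¹ - (max y r)⁻¹ = (max y r - max x r) / (max x r * max y r) := by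
    field_simp
  rw [heq, abs_div, abs_of_pos (by positivity : (0:ℝ) < max x r * max y r)]
  rw [div_le_iff₀ (by positivity)]
  have h1 : |max y r - max x r| ≤ |x - y| := by rw [abs_sub_comm]; exact hmax
  have h2 : r * r ≤ max x r * max y r := mul_le_mul hx hy hr.le hx0.le
  push_cast
  change |max y r - max x r| ≤ r⁻¹ * r⁻¹ * |x - y| * (max x r * max y r)
  have hinv : 0 < r⁻¹ * r⁻¹ := by positivity
  have step := mul_le_mul_of_nonneg_left h2 (mul_nonneg hinv.le (abs_nonneg (x - y)))
  have hrr : r⁻¹ * r⁻¹ * |x - y| * (r * r) = |x - y| := by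
    field_simp
  have key : |x - y| ≤ r⁻¹ * r⁻¹ * |x - y| * ((max x r) * (max y r)) := by
    calc |x - y| = r⁻¹ * r⁻¹ * |x - y| * (r * r) := hrr.symm
      _ ≤ _ := by linarith [step]
  linarith [h1, key]

lemma ll_clampInv {r : ℝ} (hr : 0 < r) {f : X → ℝ} (hf : LocallyLipschitz f) :
    LocallyLipschitz fun x => (max (f x) r)⁻¹ :=
  ((lipschitz_clampInv hr).locallyLipschitz).comp hf

end combinators

lemma QPsol_comp_ll {n m : ℕ} {p r : ℝ} (hp : 0 < p) (hr : 0 < r)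
    {Fl FV : EuclideanSpace ℝ (Fin n) → ℝ}
    {b₁ b₂ : EuclideanSpace ℝ (Fin n) → EuclideanSpace ℝ (Fin m)}
    (hFl : LocallyLipschitz Fl) (hFV : LocallyLipschitz FV)
    (hb₁ : LocallyLipschitz b₁) (hb₂ : LocallyLipschitz b₂) :
    LocallyLipschitz fun x => QPsol p r (Fl x) (FV x) (b₁ x) (b₂ x) := by
  have h_a := ll_inner hb₁ hb₁
  have h_c := ll_inner hb₁ hb₂
  have h_d := ll_inner hb₂ hb₂
  have h_Ft := hFl.min_const 0
  have h_s := ll_sub (ll_mul h_a hFV) (ll_mul h_c h_Ft)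
  have h_e := ll_add h_d (LocallyLipschitz.const p⁻¹)
  have h_D := ll_sub (ll_mul h_a h_e) (ll_mul h_c h_c)
  have h_iD := ll_clampInv (show (0:ℝ) < r * p⁻¹ by positivity) h_D
  have h_maxs := h_s.max_const 0
  have h_l2 : LocallyLipschitz fun x => QPlam2 p r (Fl x) (FV x) (b₁ x) (b₂ x) := by
    simp only [QPlam2]
    exact ll_mul (ll_mul (LocallyLipschitz.const 2) h_maxs) h_iD
  have h_ia := ll_clampInv hr h_a
  have h_l1 : LocallyLipschitz fun x => QPlam1 p r (Fl x) (FV x) (b₁ x) (b₂ x) := by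
    simp only [QPlam1]
    exact ll_mul (ll_sub (ll_mul h_c h_l2) (ll_mul (LocallyLipschitz.const 2) h_Ft)) h_ia
  have h_u := ll_sub (ll_smul (ll_mul (LocallyLipschitz.const (2:ℝ)⁻¹) h_l1) hb₁)
    (ll_smul (ll_mul (LocallyLipschitz.const (2:ℝ)⁻¹) h_l2) hb₂)
  have h_δ := ll_mul (LocallyLipschitz.const (2 * p)⁻¹) h_l2
  have := h_u.prodMk h_δ
  simpa only [QPsol] using this


/-- Local Lipschitz continuity of the QP-based control law (Theorem 1, item 1):
if the data of the QP depends in a locally Lipschitz way on `x`, `F_V(x) ≤ 0`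
everywhere, and at every `x` either `b₁(x) ≠ 0` or `Fλ(x) > 0`, then the map
sending `x` to the unique global minimizer of the corresponding QP is locally
Lipschitz. -/
theorem qp_control_locally_lipschitz {n m : ℕ} (p : ℝ) (hp : 0 < p)
    (Fl FV : EuclideanSpace ℝ (Fin n) → ℝ)
    (b₁ b₂ : EuclideanSpace ℝ (Fin n) → EuclideanSpace ℝ (Fin m))
    (hFl : LocallyLipschitz Fl) (hFV : LocallyLipschitz FV)
    (hb₁ : LocallyLipschitz b₁) (hb₂ : LocallyLipschitz b₂)
    (hFVnonpos : ∀ x, FV x ≤ 0)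
    (hfeas : ∀ x, b₁ x ≠ 0 ∨ 0 < Fl x)
    (z : EuclideanSpace ℝ (Fin n) → EuclideanSpace ℝ (Fin m) × ℝ)
    (hzmin : ∀ x, QPFeasible (Fl x) (FV x) (b₁ x) (b₂ x) (z x) ∧
      ∀ w, QPFeasible (Fl x) (FV x) (b₁ x) (b₂ x) w →
        QPObj p (z x) ≤ QPObj p w)
    (hzuniq : ∀ x w,
      (QPFeasible (Fl x) (FV x) (b₁ x) (b₂ x) w ∧
        ∀ v, QPFeasible (Fl x) (FV x) (b₁ x) (b₂ x) v →
          QPObj p w ≤ QPObj p v) → w = z x) :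
    LocallyLipschitz z := by
  have hz0 : ∀ x, 0 ≤ Fl x → z x = (0, 0) := by
    intro x hx
    refine (hzuniq x (0, 0) ⟨⟨?_, ?_⟩, ?_⟩).symm ▸ rfl
    · simp only [inner_zero_right, add_zero]
      exact hx
    · simp only [inner_zero_right, add_zero]
      exact hFVnonpos x
    · intro v _
      have h1 : QPObj p ((0, 0) : EuclideanSpace ℝ (Fin m) × ℝ) = 0 := by
        simp [QPObj]
      have h2 : 0 ≤ QPObj p v := by
        have := sq_nonneg ‖v.1‖
        have := sq_nonneg v.2
        unfold QPObj
        nlinarith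
      linarith
  intro x₀
  rcases lt_or_ge 0 (Fl x₀) with hpos | hnonpos
  · refine ⟨1, {x | 0 < Fl x},
      (isOpen_lt continuous_const hFl.continuous).mem_nhds hpos, ?_⟩
    intro x hx y hy
    have hxy : z x = z y := by
      rw [hz0 x (le_of_lt hx), hz0 y (le_of_lt hy)]
    rw [hxy, edist_self]
    exact zero_le
  · have hb : b₁ x₀ ≠ 0 := (hfeas x₀).resolve_right (not_lt.mpr hnonpos)
    have ha₀ : (0:ℝ) < ⟪b₁ x₀, b₁ x₀⟫ := lt_of_le_of_ne real_inner_self_nonneg (Ne.symm (inner_self_ne_zero.mpr hb))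
    set r : ℝ := ⟪b₁ x₀, b₁ x₀⟫ / 2 with hr_def
    have hr : 0 < r := by positivity
    have hUopen : IsOpen {x | r < ⟪b₁ x, b₁ x⟫} :=
      isOpen_lt continuous_const (hb₁.continuous.inner hb₁.continuous)
    have hU : {x | r < ⟪b₁ x, b₁ x⟫} ∈ nhds x₀ :=
      hUopen.mem_nhds (by rw [hr_def]; simp only [Set.mem_setOf_eq]; linarith)
    have hEq : ∀ x ∈ {x | r < ⟪b₁ x, b₁ x⟫},
        z x = QPsol p r (Fl x) (FV x) (b₁ x) (b₂ x) := by
      intro x hx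
      exact (hzuniq x _ (QPsol_spec hp hr (b₁ x) (b₂ x) (hFVnonpos x) hx)).symm
    obtain ⟨K, t, ht, hK⟩ := QPsol_comp_ll hp hr hFl hFV hb₁ hb₂ x₀
    refine ⟨K, t ∩ {x | r < ⟪b₁ x, b₁ x⟫}, Filter.inter_mem ht hU, ?_⟩
    intro x hx y hy
    rw [hEq x hx.2, hEq y hy.2]
    exact hK hx.1 hy.1
end
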